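/- For q = 1 and any commutative ring R with 1, the action of the walled Brauer algebra B^n_{r,s} on V^{⊗r} ⊗ (V*)^{⊗s} (V = R^n) is faithful if and only if n ≥ r + s. -/

import Mathlib

namespace ClassicalWalledBrauer

variable (R : Type*) [CommRing R] (n r s : ℕ)

/-- Multi-indices labelling the basis of `V^{⊗r} ⊗ (V^*)^{⊗s}` (or of `V^{⊗(r+s)}`),
`V = R^n`. -/
abbrev Idx (n m : ℕ) := Fin m → Fin n

/-- Mixed tensor space `V^{⊗r} ⊗ (V^*)^{⊗s}` (and likewise ordinary tensor space
`V^{⊗(r+s)}`), modelled on its basis of multi-indices; positions `< r` carry `V`,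
positions `≥ r` carry `V^*` (identified with `V` via `v_i ↦ v_i^*`). -/
abbrev TSpace (R : Type*) [CommRing R] (n m : ℕ) := Idx n m → R

/-- Matrix of the action of `g ∈ GL_n(R)` on mixed tensor space: `g` acts naturally on the
`V`-factors (positions `< r`) and by `(g·f)(v) = f(g⁻¹ v)` on the `V^*`-factors. -/
def glMixedMatrix (g : GL (Fin n) R) : Matrix (Idx n (r + s)) (Idx n (r + s)) R :=
  fun a a' => ∏ k : Fin (r + s),
    if (k : ℕ) < r then (g : Matrix (Fin n) (Fin n) R) (a k) (a' k)
    else ((g⁻¹ : GL (Fin n) R) : Matrix (Fin n) (Fin n) R) (a' k) (a k)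

/-- Matrix of the natural action of `g ∈ GL_n(R)` on ordinary tensor space `V^{⊗m}`. -/
def glOrdMatrix (m : ℕ) (g : GL (Fin n) R) : Matrix (Idx n m) (Idx n m) R :=
  fun a a' => ∏ k : Fin m, (g : Matrix (Fin n) (Fin n) R) (a k) (a' k)

/-- `G`-endomorphisms of mixed tensor space. -/
def EndGMixed : Set (Module.End R (TSpace R n (r + s))) :=
  {φ | ∀ g : GL (Fin n) R, Commute φ (Matrix.toLin' (glMixedMatrix R n r s g))}

/-- `G`-endomorphisms of ordinary tensor space `V^{⊗(r+s)}`. -/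
def EndGOrd : Set (Module.End R (TSpace R n (r + s))) :=
  {φ | ∀ g : GL (Fin n) R, Commute φ (Matrix.toLin' (glOrdMatrix R n (r + s) g))}

/-- Vertices of a Brauer `(r+s)`-diagram: top row (`inl`) and bottom row (`inr`). -/
abbrev Vertex (m : ℕ) := Fin m ⊕ Fin m

/-- The row (top = `true`) of a vertex. -/
def rowOf {m : ℕ} : Vertex m → Bool := Sum.elim (fun _ => true) (fun _ => false)

/-- Whether a vertex lies to the left of the wall (in the first `r` positions). -/
def leftOf {m : ℕ} (r : ℕ) : Vertex m → Bool :=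
  Sum.elim (fun k => decide ((k : ℕ) < r)) (fun k => decide ((k : ℕ) < r))

/-- A walled Brauer diagram: a perfect matching of the `2(r+s)` vertices such that
propagating edges (connecting opposite rows) stay on one side of the wall, and horizontal
edges (within a row) cross the wall. -/
def IsWalled (d : Vertex (r + s) → Vertex (r + s)) : Prop :=
  (∀ v, d (d v) = v) ∧ (∀ v, d v ≠ v) ∧
  (∀ v, (rowOf v ≠ rowOf (d v) → leftOf r v = leftOf r (d v)) ∧
        (rowOf v = rowOf (d v) → leftOf r v ≠ leftOf r (d v)))

/-- The walled Brauer diagrams. -/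
def WalledDiagram := {d : Vertex (r + s) → Vertex (r + s) // IsWalled r s d}

-- auxiliary development
section Aux
variable {m : ℕ}

/-- swap top and bottom rows -/
def vflip : Vertex m → Vertex m := Sum.elim Sum.inr Sum.inl

/-- the underlying index of a vertex -/
def vrho : Vertex m → Fin m := Sum.elim id id

/-- flip the rows on the right of the wall -/
def tau (r : ℕ) (v : Vertex m) : Vertex m := if leftOf r v then v else vflip v

/-- distinguished endpoint set: top-left and bottom-right vertices -/
def inS (r : ℕ) (v : Vertex m) : Bool := leftOf r v == rowOf v

@[simp] lemma leftOf_vflip (r : ℕ) (v : Vertex m) : leftOf r (vflip v) = leftOf r v := by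
  cases v <;> rfl

@[simp] lemma rowOf_vflip (v : Vertex m) : rowOf (vflip v) = !rowOf v := by
  cases v <;> rfl

@[simp] lemma vflip_vflip (v : Vertex m) : vflip (vflip v) = v := by
  cases v <;> rfl

@[simp] lemma vrho_vflip (v : Vertex m) : vrho (vflip v) = vrho v := by
  cases v <;> rfl

@[simp] lemma tau_tau (r : ℕ) (v : Vertex m) : tau r (tau r v) = v := by
  unfold tau
  by_cases h : leftOf r v <;> simp [h]

@[simp] lemma rowOf_tau (r : ℕ) (v : Vertex m) : rowOf (tau r v) = inS r v := by
  unfold tau inS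
  cases h : leftOf r v <;> simp [h]

@[simp] lemma vrho_tau (r : ℕ) (v : Vertex m) : vrho (tau r v) = vrho v := by
  unfold tau; split <;> simp

@[simp] lemma inS_tau (r : ℕ) (v : Vertex m) : inS r (tau r v) = rowOf v := by
  unfold inS
  rw [rowOf_tau]
  unfold tau
  split <;> rename_i h <;> unfold inS <;>
    cases hl : leftOf r v <;> cases hr : rowOf v <;> simp_all

lemma row_false {x : Vertex m} (h : rowOf x = false) : x = Sum.inr (vrho x) := by
  cases x with
  | inl k => simp [rowOf] at h
  | inr k => rfl

lemma row_true {x : Vertex m} (h : rowOf x = true) : x = Sum.inl (vrho x) := by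
  cases x with
  | inl k => rfl
  | inr k => simp [rowOf] at h

lemma vrho_injOn (r : ℕ) {v w : Vertex m} (hv : inS r v = true) (hw : inS r w = true)
    (h : vrho v = vrho w) : v = w := by
  cases v <;> cases w <;> simp_all [inS, leftOf, rowOf, vrho] <;> omega

end Aux

lemma baux (a b c e : Bool) :
    ((a ≠ b → c = e) ∧ (a = b → c ≠ e)) ↔ ((e == b) = !(c == a)) := by
  revert a b c e; decide

lemma isWalled_iff (d : Vertex (r + s) → Vertex (r + s)) :
    IsWalled r s d ↔ (∀ v, d (d v) = v) ∧ (∀ v, inS r (d v) = !inS r v) := by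
  constructor
  · rintro ⟨h1, _, h3⟩
    refine ⟨h1, fun v => ?_⟩
    have := (baux (rowOf v) (rowOf (d v)) (leftOf r v) (leftOf r (d v))).1 (h3 v)
    simpa [inS] using this
  · rintro ⟨h1, h2⟩
    refine ⟨h1, fun v hv => ?_, fun v => ?_⟩
    · have := h2 v
      rw [hv] at this
      simp at this
    · exact (baux _ _ _ _).2 (by simpa [inS] using h2 v)

section B
variable {r s : ℕ}

/-- the "all-propagating" matching conjugate to `d` by `tau` -/
def ediag (r : ℕ) {m : ℕ} (d : Vertex m → Vertex m) (v : Vertex m) : Vertex m :=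
  tau r (d (tau r v))

lemma ediag_ediag {m : ℕ} {d : Vertex m → Vertex m} (hd : ∀ v, d (d v) = v) (v : Vertex m) :
    ediag r d (ediag r d v) = v := by
  unfold ediag
  rw [tau_tau, hd, tau_tau]

lemma rowOf_ediag {m : ℕ} {d : Vertex m → Vertex m} (hd : ∀ v, inS r (d v) = !inS r v)
    (v : Vertex m) : rowOf (ediag r d v) = !rowOf v := by
  unfold ediag
  rw [rowOf_tau, hd, inS_tau]

lemma ediag_inl {m : ℕ} {d : Vertex m → Vertex m} (hd : ∀ v, inS r (d v) = !inS r v)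
    (i : Fin m) : ediag r d (Sum.inl i) = Sum.inr (vrho (ediag r d (Sum.inl i))) :=
  row_false (by rw [rowOf_ediag hd]; rfl)

lemma ediag_inr {m : ℕ} {d : Vertex m → Vertex m} (hd : ∀ v, inS r (d v) = !inS r v)
    (j : Fin m) : ediag r d (Sum.inr j) = Sum.inl (vrho (ediag r d (Sum.inr j))) :=
  row_true (by rw [rowOf_ediag hd]; rfl)

/-- all-propagating matching of a permutation -/
def eperm {m : ℕ} (σ : Equiv.Perm (Fin m)) : Vertex m → Vertex m :=
  Sum.elim (fun i => Sum.inr (σ i)) (fun j => Sum.inl (σ⁻¹ j))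

@[simp] lemma eperm_eperm {m : ℕ} (σ : Equiv.Perm (Fin m)) (v : Vertex m) :
    eperm σ (eperm σ v) = v := by cases v <;> simp [eperm]

@[simp] lemma rowOf_eperm {m : ℕ} (σ : Equiv.Perm (Fin m)) (v : Vertex m) :
    rowOf (eperm σ v) = !rowOf v := by cases v <;> rfl

/-- the walled diagram of a permutation -/
def diagOfPerm (σ : Equiv.Perm (Fin (r + s))) : WalledDiagram r s :=
  ⟨fun v => tau r (eperm σ (tau r v)), by
    rw [isWalled_iff]
    constructor
    · intro v; rw [tau_tau, eperm_eperm, tau_tau]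
    · intro v; rw [inS_tau, rowOf_eperm, rowOf_tau]⟩

lemma ediag_diagOfPerm (σ : Equiv.Perm (Fin (r + s))) (v : Vertex (r + s)) :
    ediag r (diagOfPerm σ).1 v = eperm σ v := by
  show tau r (tau r (eperm σ (tau r (tau r v)))) = _
  rw [tau_tau, tau_tau]

/-- the permutation of a walled diagram -/
def permOfDiag (d : WalledDiagram r s) : Equiv.Perm (Fin (r + s)) where
  toFun i := vrho (ediag r d.1 (Sum.inl i))
  invFun j := vrho (ediag r d.1 (Sum.inr j))
  left_inv i := by
    show vrho (ediag r d.1 (Sum.inr (vrho (ediag r d.1 (Sum.inl i))))) = i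
    rw [← ediag_inl ((isWalled_iff r s d.1).1 d.2).2,
      ediag_ediag ((isWalled_iff r s d.1).1 d.2).1]
    rfl
  right_inv j := by
    show vrho (ediag r d.1 (Sum.inl (vrho (ediag r d.1 (Sum.inr j))))) = j
    rw [← ediag_inr ((isWalled_iff r s d.1).1 d.2).2,
      ediag_ediag ((isWalled_iff r s d.1).1 d.2).1]
    rfl

/-- walled diagrams are in bijection with permutations -/
def diagEquiv (r s : ℕ) : Equiv.Perm (Fin (r + s)) ≃ WalledDiagram r s where
  toFun := diagOfPerm
  invFun := permOfDiag
  left_inv σ := by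
    apply Equiv.ext
    intro i
    show vrho (ediag r (diagOfPerm σ).1 (Sum.inl i)) = σ i
    rw [ediag_diagOfPerm]
    rfl
  right_inv d := by
    have hw := (isWalled_iff r s d.1).1 d.2
    apply Subtype.ext
    funext v
    show tau r (eperm (permOfDiag d) (tau r v)) = d.1 v
    have he : ∀ w, eperm (permOfDiag d) w = ediag r d.1 w := by
      intro w
      cases w with
      | inl i => exact (ediag_inl hw.2 i).symm
      | inr j => exact (ediag_inr hw.2 j).symm
    rw [he]
    show tau r (tau r (d.1 (tau r (tau r v)))) = d.1 v
    rw [tau_tau, tau_tau]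

@[simp] lemma diagEquiv_apply (σ : Equiv.Perm (Fin (r + s))) :
    diagEquiv r s σ = diagOfPerm σ := rfl

end B

/-- The matrix of the action of a Brauer diagram `d` (for `q = 1`): the `(a, b)` entry is
`1` if both ends of each edge of `d` carry the same index (top row labelled by `a`, bottom
row by `b`), and `0` otherwise. -/
def diagMatrix (m : ℕ) (d : Vertex m → Vertex m) : Matrix (Idx n m) (Idx n m) R :=
  fun a b =>
    if ∀ v, Sum.elim a b v = Sum.elim a b (d v) then 1 else 0

/-- Matrix of the place-permutation action of `σ ∈ 𝔖_m` on `V^{⊗m}` (the totally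
propagating Brauer diagram of `σ`). -/
def permMatrix (m : ℕ) (σ : Equiv.Perm (Fin m)) : Matrix (Idx n m) (Idx n m) R :=
  fun a b => if b = a ∘ σ then 1 else 0

/-- The representation `σ_{r,s}` of the walled Brauer algebra `B^n_{r,s}` (as the free
`R`-module on walled Brauer diagrams) on mixed tensor space. -/
noncomputable def walledRep :
    (WalledDiagram r s →₀ R) →ₗ[R] Module.End R (TSpace R n (r + s)) :=
  Finsupp.lift (Module.End R (TSpace R n (r + s))) R (WalledDiagram r s)
    (fun d => Matrix.toLin' (diagMatrix R n (r + s) d.1))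


lemma cond_iff (a b : Idx n (r + s)) (σ : Equiv.Perm (Fin (r + s))) :
    (∀ v, Sum.elim a b v = Sum.elim a b ((diagOfPerm σ).1 v)) ↔
      ∀ i, Sum.elim a b (tau r (Sum.inl i)) = Sum.elim a b (tau r (Sum.inr (σ i))) := by
  constructor
  · intro h i
    have hv := h (tau r (Sum.inl i))
    have he : (diagOfPerm σ).1 (tau r (Sum.inl i)) = tau r (Sum.inr (σ i)) := by
      show tau r (eperm σ (tau r (tau r (Sum.inl i)))) = _
      rw [tau_tau]
      rfl
    rwa [he] at hv
  · intro h v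
    have h2 : ∀ w, Sum.elim a b (tau r w) = Sum.elim a b (tau r (eperm σ w)) := by
      intro w
      cases w with
      | inl i => exact h i
      | inr j =>
        have := h (σ⁻¹ j)
        rw [show σ (σ⁻¹ j) = j from σ.apply_symm_apply j] at this
        exact this.symm
    show Sum.elim a b v = Sum.elim a b (tau r (eperm σ (tau r v)))
    have := h2 (tau r v)
    rwa [tau_tau] at this

lemma rep_apply (c : WalledDiagram r s →₀ R) (a b : Idx n (r + s)) :
    walledRep R n r s c (Pi.single b 1) a
      = c.sum fun d t => t * diagMatrix R n (r + s) d.1 a b := by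
  rw [walledRep, Finsupp.lift_apply, Finsupp.sum, Finsupp.sum, LinearMap.sum_apply,
    Finset.sum_apply]
  refine Finset.sum_congr rfl fun d _ => ?_
  simp [Matrix.toLin'_apply, Matrix.mulVec_single]

/-- q = 1: for any commutative ring `R` with `1`, the action of the walled
Brauer algebra `B^n_{r,s}` on `V^{⊗r} ⊗ (V^*)^{⊗s}` (`V = R^n`) is faithful if and only if
`n ≥ r + s`. -/
theorem walled_faithful_iff [Nontrivial R] :
    Function.Injective (walledRep R n r s) ↔ r + s ≤ n := by
  classical
  constructor
  · -- injective → r + s ≤ n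
    intro hinj
    by_contra hn
    push_neg at hn
    set c₀ : Equiv.Perm (Fin (r + s)) →₀ R :=
      Finsupp.equivFunOnFinite.symm fun σ => ((Equiv.Perm.sign σ : ℤ) : R) with hc₀
    set c : WalledDiagram r s →₀ R := Finsupp.equivMapDomain (diagEquiv r s) c₀ with hcdef
    have hc1 : c (diagOfPerm 1) = 1 := by
      have : c ((diagEquiv r s) 1) = c₀ 1 := by
        rw [hcdef, Finsupp.equivMapDomain_apply, Equiv.symm_apply_apply]
      simpa [hc₀] using this
    have hrep : walledRep R n r s c = 0 := by
      refine Module.Basis.ext (Pi.basisFun R (Idx n (r + s))) fun b => ?_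
      rw [Pi.basisFun_apply]
      funext a
      simp only [LinearMap.zero_apply, Pi.zero_apply]
      rw [rep_apply]
      rw [hcdef, Finsupp.equivMapDomain_eq_mapDomain,
        Finsupp.sum_mapDomain_index (h := fun (d : WalledDiagram r s) (t : R) => t * diagMatrix R n (r + s) d.1 a b)
          (fun d => zero_mul _) (fun d t₁ t₂ => add_mul _ _ _),
        Finsupp.sum_fintype _ (fun (σ : Equiv.Perm (Fin (r + s))) (t : R) => t * diagMatrix R n (r + s) ((diagEquiv r s) σ).1 a b) (fun σ => zero_mul _)]
      obtain ⟨i, j, hij, hija⟩ := Fintype.exists_ne_map_eq_of_card_lt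
        (fun i : Fin (r + s) => Sum.elim a b (tau r (Sum.inl i))) (by simpa using hn)
    -- the sum vanishes by the sign-reversing involution σ ↦ σ * swap i j
      show (∑ σ : Equiv.Perm (Fin (r + s)),
        c₀ σ * diagMatrix R n (r + s) ((diagEquiv r s) σ).1 a b) = 0
      have hc₀app : ∀ σ, c₀ σ = ((Equiv.Perm.sign σ : ℤ) : R) := fun σ => rfl
      have hA : ∀ k, Sum.elim a b (tau r (Sum.inl (Equiv.swap i j k)))
          = Sum.elim a b (tau r (Sum.inl k)) := by
        intro k
        rcases eq_or_ne k i with rfl | hki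
        · rw [Equiv.swap_apply_left]; exact hija.symm
        rcases eq_or_ne k j with rfl | hkj
        · rw [Equiv.swap_apply_right]; exact hija
        · rw [Equiv.swap_apply_of_ne_of_ne hki hkj]
      refine Finset.sum_ninvolution (fun σ => σ * Equiv.swap i j) ?_ ?_
        (fun σ => Finset.mem_univ _) ?_
      · intro σ
        have hsign : ((Equiv.Perm.sign (σ * Equiv.swap i j) : ℤ) : R)
            = -((Equiv.Perm.sign σ : ℤ) : R) := by
          rw [Equiv.Perm.sign_mul, Equiv.Perm.sign_swap hij]
          push_cast
          ring
        have hind : diagMatrix R n (r + s) ((diagEquiv r s) (σ * Equiv.swap i j)).1 a b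
            = diagMatrix R n (r + s) ((diagEquiv r s) σ).1 a b := by
          show (if _ then (1:R) else 0) = (if _ then (1:R) else 0)
          simp only [diagEquiv_apply, cond_iff]
          refine if_congr ⟨fun H k => ?_, fun H k => ?_⟩ rfl rfl
          · have := H (Equiv.swap i j k)
            rw [hA, Equiv.Perm.mul_apply, Equiv.swap_apply_self] at this
            exact this
          · rw [Equiv.Perm.mul_apply, ← hA k]
            exact H _
        rw [hc₀app, hc₀app, hsign, hind]
        ring
      · intro σ _ heq
        have heq' : σ * Equiv.swap i j = σ := heq
        have : σ (Equiv.swap i j i) = σ i := by rw [← Equiv.Perm.mul_apply, heq']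
        rw [Equiv.swap_apply_left] at this
        exact hij (σ.injective this).symm
      · intro σ
        show σ * Equiv.swap i j * Equiv.swap i j = σ
        rw [mul_assoc, Equiv.swap_mul_self, mul_one]
    have h0 : c = 0 := hinj (by rw [hrep, map_zero])
    rw [h0] at hc1
    simp at hc1
  · -- r + s ≤ n → injective
    intro h
    rw [injective_iff_map_eq_zero]
    intro c hc
    ext d₀
    obtain ⟨h1, h2⟩ := (isWalled_iff r s d₀.1).1 d₀.2
    set lab : Vertex (r + s) → Fin n :=
      fun v => Fin.castLE h (vrho (if inS r v = true then v else d₀.1 v)) with hlab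
    have hedge : ∀ v, lab v = lab (d₀.1 v) := by
      intro v
      by_cases hv : inS r v = true
      · have hdv : inS r (d₀.1 v) = false := by rw [h2 v, hv]; rfl
        simp [hlab, hv, hdv, h1 v]
      · have hv' : inS r v = false := by simpa using hv
        have hdv : inS r (d₀.1 v) = true := by rw [h2 v, hv']; rfl
        simp [hlab, hv', hdv]
    have huniq : ∀ d : WalledDiagram r s, (∀ v, lab v = lab (d.1 v)) → d = d₀ := by
      intro d hd
      obtain ⟨g1, g2⟩ := (isWalled_iff r s d.1).1 d.2
      apply Subtype.ext
      funext v
      have hl := hd v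
      by_cases hv : inS r v = true
      · have hdv : inS r (d.1 v) = false := by rw [g2 v, hv]; rfl
        simp only [hlab, hv, hdv, if_true, if_false, Bool.false_eq_true] at hl
        have hvr := Fin.castLE_injective h hl
        have hS2 : inS r (d₀.1 (d.1 v)) = true := by rw [h2, hdv]; rfl
        have hvv := vrho_injOn r hv hS2 hvr
        have := congrArg d₀.1 hvv
        rw [h1] at this
        exact this.symm
      · have hv' : inS r v = false := by simpa using hv
        have hdv : inS r (d.1 v) = true := by rw [g2 v, hv']; rfl
        simp only [hlab, hv', hdv, if_true, if_false, Bool.false_eq_true] at hl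
        have hvr := Fin.castLE_injective h hl
        have hS1 : inS r (d₀.1 v) = true := by rw [h2, hv']; rfl
        exact (vrho_injOn r hS1 hdv hvr).symm
    have helim : Sum.elim (lab ∘ Sum.inl) (lab ∘ Sum.inr) = lab := by
      funext v; cases v <;> rfl
    have hcond : ∀ d : WalledDiagram r s,
        diagMatrix R n (r + s) d.1 (lab ∘ Sum.inl) (lab ∘ Sum.inr)
          = if d = d₀ then (1 : R) else 0 := by
      intro d
      show (if _ then (1:R) else 0) = _
      by_cases hd : d = d₀
      · subst hd
        rw [if_pos rfl, if_pos]
        intro v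
        rw [helim]
        exact hedge v
      · rw [if_neg hd, if_neg]
        intro hcontra
        exact hd (huniq d (by rw [← helim]; exact hcontra))
    have h0 : (c.sum fun d t =>
        t * diagMatrix R n (r + s) d.1 (lab ∘ Sum.inl) (lab ∘ Sum.inr)) = 0 := by
      rw [← rep_apply, hc]
      rfl
    have h1' : (c.sum fun d t =>
        t * diagMatrix R n (r + s) d.1 (lab ∘ Sum.inl) (lab ∘ Sum.inr)) = c d₀ := by
      rw [Finsupp.sum_congr (g2 := fun d t => if d = d₀ then t else 0)
        (fun d _ => by rw [hcond d]; by_cases hdd : d = d₀ <;> simp [hdd])]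
      exact Finsupp.sum_ite_self_eq' c d₀
    simp only [Finsupp.coe_zero, Pi.zero_apply]
    rw [← h1', h0]
end ClassicalWalledBrauer
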